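/- If a graph Γ contains no odd cycle of length at most 2t+1, then its t-fold Mycielskian M_t(Γ) also contains no odd cycle of length at most 2t+1. -/

import Mathlib

/-- `G` contains no odd cycle of length at most `L`. -/
def OddGirthGT {V : Type*} (G : SimpleGraph V) (L : ℕ) : Prop :=
  ∀ ⦃v : V⦄ (w : G.Walk v v), w.IsCycle → Odd w.length → L < w.length

/-- Adjacency-generating relation for the `t`-fold Mycielskian.
Layers `1,…,t+1` are encoded by `Fin (t+1)` (layer `ℓ` is index `ℓ-1`),
and the extra root vertex `r` is `Sum.inr ()`. -/
def mycRel {V : Type*} (t : ℕ) (Γ : SimpleGraph V) :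
    ((V × Fin (t + 1)) ⊕ Unit) → ((V × Fin (t + 1)) ⊕ Unit) → Prop
  | Sum.inl (v, i), Sum.inl (w, j) =>
      Γ.Adj v w ∧ (((i : ℕ) = t ∧ (j : ℕ) = t) ∨ (j : ℕ) = (i : ℕ) + 1)
  | Sum.inl (_, i), Sum.inr _ => (i : ℕ) = 0
  | _, _ => False

/-- The `t`-fold Mycielskian `M_t(Γ)`. -/
def Myc {V : Type*} (t : ℕ) (Γ : SimpleGraph V) :
    SimpleGraph ((V × Fin (t + 1)) ⊕ Unit) :=
  SimpleGraph.fromRel (mycRel t Γ)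

open SimpleGraph Walk

section OddClosedWalk

variable {V : Type*} {Γ : SimpleGraph V}

private lemma edge_not_mem_of_isPath {u v : V} (p : Γ.Walk v u) (hp : p.IsPath)
    (hl : 2 ≤ p.length) : s(u, v) ∉ p.edges := by
  intro he
  cases p with
  | nil => simp at hl
  | @cons _ v' _ h' q =>
    have hnd := hp.support_nodup
    rw [Walk.support_cons, List.nodup_cons] at hnd
    rw [Walk.edges_cons, List.mem_cons] at he
    rcases he with he | he
    · have hvu : v' = u := by
        rw [Sym2.eq_iff] at he
        rcases he with ⟨hu, hv⟩ | ⟨hu, hv⟩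
        · exact hv.symm.trans hu.symm
        · exact hu.symm
      have hq : q.IsPath := hp.of_cons
      subst hvu
      cases q with
      | nil => simp at hl
      | @cons _ y _ h'' q'' =>
        have hnd' := hq.support_nodup
        rw [Walk.support_cons, List.nodup_cons] at hnd'
        exact hnd'.1 q''.end_mem_support
    · exact hnd.1 (q.snd_mem_support_of_mem_edges he)

private lemma isCycle_of_tailNodup {u : V} (w : Γ.Walk u u) (hodd : Odd w.length)
    (hnd : w.support.tail.Nodup) : w.IsCycle := by
  cases w with
  | nil => simp [Nat.odd_iff] at hodd
  | @cons _ v' _ h p =>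
    rw [Walk.support_cons, List.tail_cons] at hnd
    have hp : p.IsPath := Walk.IsPath.mk' hnd
    rw [Walk.cons_isCycle_iff]
    refine ⟨hp, edge_not_mem_of_isPath p hp ?_⟩
    have h0 : p.length ≠ 0 := fun h0 => h.ne (Walk.eq_of_length_eq_zero h0).symm
    rw [Walk.length_cons, Nat.odd_iff] at hodd
    omega

private lemma split_closed [DecidableEq V] {x : V} (c : Γ.Walk x x) (h2 : 2 ≤ c.support.tail.count x) :
    ∃ (c1 c2 : Γ.Walk x x), 1 ≤ c1.length ∧ 1 ≤ c2.length ∧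
      c1.length + c2.length = c.length := by
  classical
  cases c with
  | nil => simp at h2
  | @cons _ y _ h d =>
    rw [Walk.support_cons, List.tail_cons] at h2
    have hxd : x ∈ d.support := List.count_pos_iff.mp (by omega)
    have hcount : d.support.count x =
        (d.takeUntil x hxd).support.count x + (d.dropUntil x hxd).support.tail.count x := by
      conv_lhs => rw [← d.take_spec hxd]
      rw [Walk.support_append, List.count_append]
    rw [Walk.count_support_takeUntil_eq_one] at hcount
    refine ⟨Walk.cons h (d.takeUntil x hxd), d.dropUntil x hxd, by simp, ?_, ?_⟩
    · by_contra hh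
      have h0 : (d.dropUntil x hxd).length = 0 := by omega
      rw [Walk.nil_iff_eq_nil.mp (Walk.length_eq_zero_iff.mp h0)] at hcount
      simp at hcount
      omega
    · have hspec := congrArg Walk.length (d.take_spec hxd)
      rw [Walk.length_append] at hspec
      rw [Walk.length_cons, Walk.length_cons]
      omega

private lemma exists_oddCycle : ∀ (n : ℕ) {u : V} (w : Γ.Walk u u), w.length ≤ n →
    Odd w.length →
    ∃ (x : V) (c : Γ.Walk x x), c.IsCycle ∧ Odd c.length ∧ c.length ≤ w.length := by
  classical
  intro n
  induction n with
  | zero =>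
    intro u w hle hodd
    rw [Nat.odd_iff] at hodd
    omega
  | succ n ih =>
    intro u w hle hodd
    by_cases hnd : w.support.tail.Nodup
    · exact ⟨u, w, isCycle_of_tailNodup w hodd hnd, hodd, le_refl _⟩
    · obtain ⟨x, hx⟩ := List.exists_duplicate_iff_not_nodup.mpr hnd
      have hx2 : 2 ≤ w.support.tail.count x := List.duplicate_iff_two_le_count.mp hx
      have hxs : x ∈ w.support := by
        rw [Walk.support_eq_cons]
        exact List.mem_cons_of_mem _ (List.count_pos_iff.mp (by omega))
      have hlen : (w.rotate x hxs).length = w.length := by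
        have hd := (Walk.rotate_darts w x hxs).perm.length_eq
        rwa [Walk.length_darts, Walk.length_darts] at hd
      have hc2 : 2 ≤ (w.rotate x hxs).support.tail.count x := by
        rw [(Walk.support_rotate w x hxs).perm.count_eq]
        exact hx2
      obtain ⟨c1, c2, h1, h2Len, hsum⟩ := split_closed (w.rotate x hxs) hc2
      rw [hlen] at hsum
      have hone : Odd c1.length ∨ Odd c2.length := by
        rw [Nat.odd_iff] at hodd ⊢
        rw [Nat.odd_iff]
        omega
      rcases hone with ho | ho
      · obtain ⟨z, c, hc, hco, hcl⟩ := ih c1 (by omega) ho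
        exact ⟨z, c, hc, hco, by omega⟩
      · obtain ⟨z, c, hc, hco, hcl⟩ := ih c2 (by omega) ho
        exact ⟨z, c, hc, hco, by omega⟩

end OddClosedWalk

section MycLemmas

variable {V : Type*} {t : ℕ} {Γ : SimpleGraph V}

/-- Layer function. -/
private def lyr (t : ℕ) : ((V × Fin (t + 1)) ⊕ Unit) → ℤ
  | Sum.inl (_, i) => (i : ℕ)
  | Sum.inr _ => -1

private lemma step_cases {x y : (V × Fin (t + 1)) ⊕ Unit} (h : (Myc t Γ).Adj x y) :
    lyr t x - lyr t y = 1 ∨ lyr t x - lyr t y = -1 ∨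
      (lyr t x = t ∧ lyr t y = t) := by
  rw [Myc, SimpleGraph.fromRel_adj] at h
  obtain ⟨-, h | h⟩ := h
  · rcases x with ⟨xv, xi⟩ | xu
    · rcases y with ⟨yv, yi⟩ | yu
      · obtain ⟨-, ⟨hi, hj⟩ | hj⟩ := h
        · right; right; constructor <;> simp [lyr, hi, hj]
        · right; left; simp only [lyr]; omega
      · simp only [mycRel] at h
        left; simp only [lyr]; omega
    · exact absurd h (by simp [mycRel])
  · rcases y with ⟨yv, yi⟩ | yu
    · rcases x with ⟨xv, xi⟩ | xu
      · obtain ⟨-, ⟨hi, hj⟩ | hj⟩ := h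
        · right; right; constructor <;> simp [lyr, hi, hj]
        · left; simp only [lyr]; omega
      · simp only [mycRel] at h
        right; left; simp only [lyr]; omega
    · exact absurd h (by simp [mycRel])

private lemma walk_parity : ∀ {x y : (V × Fin (t + 1)) ⊕ Unit} (p : (Myc t Γ).Walk x y),
    (∀ u ∈ p.support, lyr t u ≠ (t : ℤ)) →
    Even (lyr t y - lyr t x + p.length) := by
  intro x y p
  induction p with
  | nil => intro _; simp
  | @cons a b c h q ih =>
    intro H
    have hx : lyr t a ≠ (t : ℤ) := H a (by simp)
    have hstep := step_cases h
    have hq : Even (lyr t c - lyr t b + q.length) := by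
      refine ih fun u hu => H u ?_
      rw [Walk.support_cons]
      exact List.mem_cons_of_mem _ hu
    rw [Int.even_iff] at hq ⊢
    rw [Walk.length_cons]
    push_cast
    rcases hstep with h1 | h1 | ⟨h1, -⟩
    · omega
    · omega
    · exact absurd h1 hx

private lemma walk_bound : ∀ {x y : (V × Fin (t + 1)) ⊕ Unit} (p : (Myc t Γ).Walk x y),
    lyr t x - lyr t y ≤ p.length ∧ lyr t y - lyr t x ≤ p.length := by
  intro x y p
  induction p with
  | nil => simp
  | @cons a b c h q ih =>
    have hstep := step_cases h
    rw [Walk.length_cons]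
    push_cast
    rcases hstep with h1 | h1 | ⟨h1, h2⟩ <;> omega

private lemma walk_project : ∀ {x y : (V × Fin (t + 1)) ⊕ Unit}
    (p : (Myc t Γ).Walk x y), (Sum.inr () ∉ p.support) →
    ∀ (va : V) (ia : Fin (t + 1)), x = Sum.inl (va, ia) →
    ∃ (vb : V) (ib : Fin (t + 1)) (q : Γ.Walk va vb),
      y = Sum.inl (vb, ib) ∧ q.length = p.length := by
  intro x y p
  induction p with
  | nil =>
    intro _ va ia hx
    exact ⟨va, ia, Walk.nil, hx, rfl⟩
  | @cons a b c h q ih =>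
    intro hr va ia hx
    rw [Walk.support_cons, List.mem_cons] at hr
    push_neg at hr
    obtain ⟨hr1, hr2⟩ := hr
    have hb : b ≠ Sum.inr () := fun hb => hr2 (hb ▸ q.start_mem_support)
    have hbeq : ∃ (vb' : V) (ib' : Fin (t + 1)), b = Sum.inl (vb', ib') := by
      rcases b with ⟨vb', ib'⟩ | u
      · exact ⟨vb', ib', rfl⟩
      · exact absurd rfl hb
    obtain ⟨vb', ib', rfl⟩ := hbeq
    have hadj : Γ.Adj va vb' := by
        subst hx
        rw [Myc, SimpleGraph.fromRel_adj] at h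
        obtain ⟨-, h | h⟩ := h
        · exact h.1
        · exact h.1.symm
    obtain ⟨vb, ib, q', hy, hql⟩ := ih hr2 vb' ib' rfl
    exact ⟨vb, ib, Walk.cons hadj q', hy, by rw [Walk.length_cons, Walk.length_cons, hql]⟩

end MycLemmas

theorem stmt_0 {V : Type*} (t : ℕ) (Γ : SimpleGraph V)
    (h : OddGirthGT Γ (2 * t + 1)) :
    OddGirthGT (Myc t Γ) (2 * t + 1) := by
  classical
  intro a w hcyc hodd
  rcases Classical.em ((Sum.inr () : (V × Fin (t + 1)) ⊕ Unit) ∈ w.support) with hr | hr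
  · -- the cycle passes through the root
    set w' := w.rotate _ hr with hw'
    have hlen : w'.length = w.length := by
      have hd := (Walk.rotate_darts w _ hr).perm.length_eq
      rwa [Walk.length_darts, Walk.length_darts] at hd
    have hex : ∃ u ∈ w'.support, lyr t u = (t : ℤ) := by
      by_contra hcon
      push_neg at hcon
      have := walk_parity w' hcon
      simp only [sub_self, zero_add] at this
      rw [Int.even_coe_nat, hlen] at this
      exact (Nat.not_even_iff_odd.mpr hodd) this
    obtain ⟨u, hu, hut⟩ := hex
    have hspec := congrArg Walk.length (w'.take_spec hu)
    rw [Walk.length_append] at hspec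
    have hb1 := (walk_bound (w'.takeUntil u hu)).2
    have hb2 := (walk_bound (w'.dropUntil u hu)).1
    rw [hut] at hb1 hb2
    simp only [lyr] at hb1 hb2
    omega
  · -- the cycle avoids the root
    have ha : ∃ va ia, a = Sum.inl (va, ia) := by
      rcases a with ⟨va, ia⟩ | au
      · exact ⟨va, ia, rfl⟩
      · exact absurd w.start_mem_support hr
    obtain ⟨va, ia, rfl⟩ := ha
    obtain ⟨vb, ib, q, hy, hql⟩ := walk_project w hr va ia rfl
    injection hy with hpair
    injection hpair with h1 h2
    subst h1
    by_contra hle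
    push_neg at hle
    obtain ⟨z, c, hc, hco, hcl⟩ := exists_oddCycle q.length q le_rfl (by rwa [hql])
    have hgt := h c hc hco
    omega
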